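/- The map f : Q(2,3) → Q(2,3) given by f(x, y) = (−5x, y) is a well-defined injective group homomorphism, its image has index 5 in Q(2,3), and ⋂_{k=1}^∞ im f^k equals the subgroup 0 ⋊ ℤ = {(0, y) : y ∈ ℤ} of Q(2,3). -/

import Mathlib

open Multiplicative

/-- `ℤ[1/6]` as an additive subgroup of `ℚ`. -/
def Z16 : AddSubgroup ℚ where
  carrier := {q : ℚ | ∃ (m : ℤ) (k : ℕ), q = m / 6 ^ k}
  zero_mem' := ⟨0, 0, by norm_num⟩
  add_mem' := by
    rintro a b ⟨m, k, rfl⟩ ⟨m', k', rfl⟩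
    refine ⟨m * 6 ^ k' + m' * 6 ^ k, k + k', ?_⟩
    push_cast
    rw [pow_add]
    field_simp
  neg_mem' := by
    rintro a ⟨m, k, rfl⟩
    exact ⟨-m, k, by push_cast; ring⟩

/-- Multiplication by `3/2` as an additive automorphism of `ℤ[1/6]`. -/
def mul32 : Z16 ≃+ Z16 where
  toFun q := ⟨(3 / 2 : ℚ) * q, by
    obtain ⟨m, k, hq⟩ := q.2
    refine ⟨9 * m, k + 1, ?_⟩
    rw [hq]; push_cast; rw [pow_succ]; field_simp; ring⟩
  invFun q := ⟨(2 / 3 : ℚ) * q, by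
    obtain ⟨m, k, hq⟩ := q.2
    refine ⟨4 * m, k + 1, ?_⟩
    rw [hq]; push_cast; rw [pow_succ]; field_simp; ring⟩
  left_inv q := Subtype.ext (by
    show (2 / 3 : ℚ) * ((3 / 2 : ℚ) * (q : ℚ)) = (q : ℚ)
    ring)
  right_inv q := Subtype.ext (by
    show (3 / 2 : ℚ) * ((2 / 3 : ℚ) * (q : ℚ)) = (q : ℚ)
    ring)
  map_add' a b := Subtype.ext (by push_cast; ring)

/-- The action of `ℤ` on `ℤ[1/6]` in which `1` acts by multiplication by `3/2`. -/
def phiQ : Multiplicative ℤ →* MulAut (Multiplicative Z16) :=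
  zpowersHom (MulAut (Multiplicative Z16)) (AddEquiv.toMultiplicative mul32)

/-- The group `Q(2,3) = ℤ[1/6] ⋊ ℤ`, where the generator `1 ∈ ℤ` acts on `ℤ[1/6]` by
multiplication by `3/2`. -/
abbrev Q23 : Type := SemidirectProduct (Multiplicative Z16) (Multiplicative ℤ) phiQ

/-- The element `(1, 0)` of `Q(2,3)`. -/
def Qa : Q23 := SemidirectProduct.inl (ofAdd (⟨1, 1, 0, by norm_num⟩ : Z16))

/-- The element `(0, 1)` of `Q(2,3)`. -/
def Qt : Q23 := SemidirectProduct.inr (ofAdd (1 : ℤ))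

/-- The single relator `t a² t⁻¹ a⁻³` of the Baumslag–Solitar group `BS(2,3)`,
with generator `0` playing the role of `a` and generator `1` the role of `t`. -/
def BSrels : Set (FreeGroup (Fin 2)) :=
  {FreeGroup.of 1 * FreeGroup.of 0 ^ 2 * (FreeGroup.of 1)⁻¹ * (FreeGroup.of 0 ^ 3)⁻¹}

/-- The Baumslag–Solitar group `BS(2,3) = ⟨a, t ∣ t a² t⁻¹ = a³⟩`. -/
abbrev BS23 : Type := PresentedGroup BSrels

/-- The generator `a` of `BS(2,3)`. -/
def BSa : BS23 := PresentedGroup.of 0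

/-- The generator `t` of `BS(2,3)`. -/
def BSt : BS23 := PresentedGroup.of 1

/-- The `k`-th iterate of a group endomorphism. -/
def iterHom {G : Type*} [Group G] (f : G →* G) : ℕ → (G →* G)
  | 0 => MonoidHom.id G
  | k + 1 => (iterHom f k).comp f

instance : Fact (Nat.Prime 5) := ⟨by norm_num⟩

noncomputable def v (q : ℚ) : ZMod 5 := (q.num : ZMod 5) * (q.den : ZMod 5)⁻¹

lemma six_zmod : ((6 : ZMod 5)) = 1 := by decide

lemma v_eq (m : ℤ) (k : ℕ) : v ((m : ℚ) / 6 ^ k) = (m : ZMod 5) := by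
  set q : ℚ := (m : ℚ) / 6 ^ k with hq
  have hden : (q.den : ℤ) ∣ 6 ^ k := by
    have := @Rat.den_dvd m (6 ^ k)
    simpa [hq, Rat.divInt_eq_div] using this
  have hdenu : IsUnit ((q.den : ℤ) : ZMod 5) := by
    obtain ⟨c, hc⟩ := hden
    have : ((q.den : ℤ) : ZMod 5) * (c : ZMod 5) = 1 := by
      have := congrArg (fun z : ℤ => (z : ZMod 5)) hc
      push_cast at this
      rw [six_zmod] at this; simpa using this.symm
    exact ⟨⟨_, _, this, by rw [mul_comm]; exact this⟩, rfl⟩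
  have hcross : q.num * 6 ^ k = m * q.den := by
    have h6 : ((6:ℚ) ^ k) ≠ 0 := by positivity
    have hd : (q.den : ℚ) ≠ 0 := by exact_mod_cast q.den_nz
    have : (q.num : ℚ) / q.den = (m : ℚ) / 6 ^ k := by rw [Rat.num_div_den]
    field_simp at this
    rw [mul_comm (m : ℤ)]
    exact_mod_cast this
  have h5 : (q.num : ZMod 5) = (m : ZMod 5) * (q.den : ZMod 5) := by
    have := congrArg (fun z : ℤ => (z : ZMod 5)) hcross
    push_cast at this
    rw [six_zmod] at this
    simpa using this
  have hne : ((q.den : ℤ) : ZMod 5) ≠ 0 := hdenu.ne_zero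
  unfold v
  rw [h5]
  push_cast at hne ⊢
  field_simp

noncomputable def vv (x : Z16) : ZMod 5 := v (x : ℚ)

lemma vv_rep (m : ℤ) (k : ℕ) (x : Z16) (h : (x : ℚ) = m / 6 ^ k) :
    vv x = (m : ZMod 5) := by rw [vv, h, v_eq]

lemma vv_add (x y : Z16) : vv (x + y) = vv x + vv y := by
  obtain ⟨m, k, hx⟩ := x.2
  obtain ⟨m', k', hy⟩ := y.2
  have hxy : ((x + y : Z16) : ℚ) = ((m * 6 ^ k' + m' * 6 ^ k : ℤ) : ℚ) / 6 ^ (k + k') := by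
    push_cast [hx, hy]
    rw [pow_add]
    field_simp
  rw [vv_rep _ _ _ hxy, vv_rep m k x hx, vv_rep m' k' y hy]
  push_cast
  rw [six_zmod]
  ring

lemma vv_smul (c : ℤ) (x : Z16) : vv (c • x) = (c : ZMod 5) * vv x := by
  obtain ⟨m, k, hx⟩ := x.2
  have h : ((c • x : Z16) : ℚ) = ((c * m : ℤ) : ℚ) / 6 ^ k := by
    push_cast [hx, zsmul_eq_mul]
    ring
  rw [vv_rep _ _ _ h, vv_rep m k x hx]
  push_cast
  ring

lemma vv_zero : vv 0 = 0 := by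
  have : ((0 : Z16) : ℚ) = ((0 : ℤ) : ℚ) / 6 ^ 0 := by norm_num
  rw [vv_rep _ _ _ this]; norm_num

lemma vv_neg (x : Z16) : vv (-x) = -vv x := by
  have h := vv_smul (-1) x
  simpa using h

lemma vv_mul32 (x : Z16) : vv (mul32 x) = 4 * vv x := by
  obtain ⟨m, k, hx⟩ := x.2
  have h : ((mul32 x : Z16) : ℚ) = ((9 * m : ℤ) : ℚ) / 6 ^ (k + 1) := by
    show (3 / 2 : ℚ) * (x : ℚ) = _
    rw [hx]; push_cast; rw [pow_succ]; field_simp; ring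
  rw [vv_rep _ _ _ h, vv_rep m k x hx]
  push_cast
  have : ((9 : ZMod 5)) = 4 := by decide
  rw [this]

lemma vv_mul32_symm (x : Z16) : vv (mul32.symm x) = 4 * vv x := by
  obtain ⟨m, k, hx⟩ := x.2
  have h : ((mul32.symm x : Z16) : ℚ) = ((4 * m : ℤ) : ℚ) / 6 ^ (k + 1) := by
    show (2 / 3 : ℚ) * (x : ℚ) = _
    rw [hx]; push_cast; rw [pow_succ]; field_simp; ring
  rw [vv_rep _ _ _ h, vv_rep m k x hx]
  push_cast
  ring

lemma four_ne : (4 : ZMod 5) ≠ 0 := by decide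

lemma vv_phi_zero_iff (g : Multiplicative ℤ) (u : Multiplicative Z16) :
    vv (toAdd (phiQ g u)) = 0 ↔ vv (toAdd u) = 0 := by
  have key : ∀ (z : ℤ) (u : Multiplicative Z16),
      vv (toAdd (((AddEquiv.toMultiplicative mul32) ^ z : MulAut (Multiplicative Z16)) u)) = 0 ↔
      vv (toAdd u) = 0 := by
    intro z
    induction z using Int.induction_on with
    | zero => intro u; simp
    | succ n ih =>
        intro u
        have hz : ((AddEquiv.toMultiplicative mul32 : MulAut (Multiplicative Z16)) ^ ((n : ℤ) + 1))
            = (AddEquiv.toMultiplicative mul32 : MulAut (Multiplicative Z16)) ^ (n : ℤ) *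
              (AddEquiv.toMultiplicative mul32 : MulAut (Multiplicative Z16)) := zpow_add_one _ _
        rw [hz, MulAut.mul_apply, ih]
        have : toAdd ((AddEquiv.toMultiplicative mul32 : MulAut (Multiplicative Z16)) u)
            = mul32 (toAdd u) := rfl
        rw [this, vv_mul32]
        constructor
        · intro h; rcases mul_eq_zero.1 h with h | h
          · exact absurd h four_ne
          · exact h
        · intro h; rw [h, mul_zero]
    | pred n ih =>
        intro u
        have hz : ((AddEquiv.toMultiplicative mul32 : MulAut (Multiplicative Z16)) ^ (-(n : ℤ) - 1))
            = (AddEquiv.toMultiplicative mul32 : MulAut (Multiplicative Z16)) ^ (-(n : ℤ)) *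
              ((AddEquiv.toMultiplicative mul32 : MulAut (Multiplicative Z16)))⁻¹ := by
          rw [← zpow_neg_one, ← zpow_add]; ring_nf
        rw [hz, MulAut.mul_apply, ih]
        have : toAdd (((AddEquiv.toMultiplicative mul32 : MulAut (Multiplicative Z16)))⁻¹ u)
            = mul32.symm (toAdd u) := rfl
        rw [this, vv_mul32_symm]
        constructor
        · intro h; rcases mul_eq_zero.1 h with h | h
          · exact absurd h four_ne
          · exact h
        · intro h; rw [h, mul_zero]
  have : phiQ g = (AddEquiv.toMultiplicative mul32 : MulAut (Multiplicative Z16)) ^ (toAdd g) := rfl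
  rw [this]
  exact key (toAdd g) u

def neg5add : Z16 →+ Z16 where
  toFun x := (-5 : ℤ) • x
  map_zero' := smul_zero _
  map_add' a b := smul_add _ _ _

def neg5 : Multiplicative Z16 →* Multiplicative Z16 :=
  AddMonoidHom.toMultiplicative neg5add

lemma neg5_apply (u : Multiplicative Z16) : neg5 u = ofAdd ((-5 : ℤ) • toAdd u) := rfl

lemma hcomm : ∀ g : Multiplicative ℤ,
    neg5.comp (phiQ g).toMonoidHom = ((phiQ g)).toMonoidHom.comp neg5 := by
  intro g
  refine MonoidHom.ext fun u => ?_
  show ofAdd ((-5 : ℤ) • toAdd (phiQ g u)) = phiQ g (ofAdd ((-5 : ℤ) • toAdd u))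
  set A : Z16 →+ Z16 := MonoidHom.toAdditive (phiQ g).toMonoidHom with hA
  have h1 : ∀ w : Multiplicative Z16, phiQ g w = ofAdd (A (toAdd w)) := fun _ => rfl
  rw [h1, h1]
  exact congrArg ofAdd (map_zsmul A (-5) (toAdd u)).symm

def fQ : Q23 →* Q23 := SemidirectProduct.map neg5 (MonoidHom.id _) hcomm

lemma fQ_apply (x : Z16) (y : ℤ) :
    fQ ⟨ofAdd x, ofAdd y⟩ = ⟨ofAdd ((-5 : ℤ) • x), ofAdd y⟩ := rfl

lemma neg5_inj : Function.Injective neg5 := by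
  intro a b h
  have h1 : (-5 : ℤ) • (toAdd a) = (-5 : ℤ) • (toAdd b) := by
    have := congrArg toAdd h
    simpa [neg5_apply] using this
  have h2 : (-5 : ℚ) * ((toAdd a : Z16) : ℚ) = (-5 : ℚ) * ((toAdd b : Z16) : ℚ) := by
    have := congrArg (fun z : Z16 => (z : ℚ)) h1
    push_cast [zsmul_eq_mul] at this
    exact this
  have h3 : ((toAdd a : Z16) : ℚ) = ((toAdd b : Z16) : ℚ) := by
    have : (-5 : ℚ) ≠ 0 := by norm_num
    exact mul_left_cancel₀ this h2
  have h4 : toAdd a = toAdd b := Subtype.ext h3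
  exact toAdd.injective h4

lemma fQ_inj : Function.Injective fQ := by
  intro p q h
  have hl : neg5 p.left = neg5 q.left := congrArg (fun z : Q23 => z.left) h
  have hr : p.right = q.right := by
    have := congrArg (fun z : Q23 => z.right) h
    simpa [fQ] using this
  exact SemidirectProduct.ext (neg5_inj hl) hr

lemma mem_range_iff (p : Q23) : p ∈ fQ.range ↔ vv (toAdd p.left) = 0 := by
  constructor
  · rintro ⟨q, rfl⟩
    have : toAdd (fQ q).left = (-5 : ℤ) • toAdd q.left := rfl
    rw [this, vv_smul]
    have : ((-5 : ℤ) : ZMod 5) = 0 := by decide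
    rw [this, zero_mul]
  · intro h
    obtain ⟨m, k, hx⟩ := (toAdd p.left).2
    rw [vv_rep m k _ hx] at h
    obtain ⟨c, hc⟩ := (ZMod.intCast_zmod_eq_zero_iff_dvd m 5).1 h
    refine ⟨⟨ofAdd ⟨-(c : ℚ) / 6 ^ k, -c, k, by push_cast; ring⟩, p.right⟩, ?_⟩
    apply SemidirectProduct.ext
    · show ofAdd ((-5 : ℤ) • (⟨-(c : ℚ) / 6 ^ k, _⟩ : Z16)) = p.left
      have : ((-5 : ℤ) • (⟨-(c : ℚ) / 6 ^ k, ⟨-c, k, by push_cast; ring⟩⟩ : Z16)) = toAdd p.left := by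
        apply Subtype.ext
        push_cast [zsmul_eq_mul, hx, hc]
        ring
      rw [this]
      rfl
    · rfl

lemma rel_iff (a b : Q23) :
    a⁻¹ * b ∈ fQ.range ↔ vv (toAdd a.left) = vv (toAdd b.left) := by
  rw [mem_range_iff]
  have h1 : (a⁻¹ * b).left = phiQ (a.right)⁻¹ (a.left⁻¹ * b.left) := by
    rw [SemidirectProduct.mul_left, SemidirectProduct.inv_left, SemidirectProduct.inv_right,
      map_mul]
  rw [h1, vv_phi_zero_iff]
  have h2 : toAdd (a.left⁻¹ * b.left) = -toAdd a.left + toAdd b.left := rfl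
  rw [h2, vv_add, vv_neg]
  exact neg_add_eq_zero

lemma index_eq : fQ.range.index = 5 := by
  have e : (Q23 ⧸ fQ.range) ≃ ZMod 5 := by
    refine Equiv.ofBijective
      (fun q => Quotient.liftOn' q (fun p => vv (toAdd p.left)) ?_) ⟨?_, ?_⟩
    · intro a b h
      rw [QuotientGroup.leftRel_apply] at h
      exact (rel_iff a b).1 h
    · intro q1 q2
      induction q1 using Quotient.inductionOn' with
      | h a =>
        induction q2 using Quotient.inductionOn' with
        | h b =>
          intro h
          apply Quotient.sound'
          rw [QuotientGroup.leftRel_apply]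
          exact (rel_iff a b).2 h
    · intro c
      refine ⟨Quotient.mk'' (SemidirectProduct.inl (ofAdd ⟨(c.val : ℚ), (c.val : ℤ), 0, by
        push_cast; norm_num⟩)), ?_⟩
      have : ((⟨(c.val : ℚ), (c.val : ℤ), 0, by push_cast; norm_num⟩ : Z16) : ℚ)
          = ((c.val : ℤ) : ℚ) / 6 ^ 0 := by push_cast; norm_num
      show vv _ = c
      rw [SemidirectProduct.left_inl, toAdd_ofAdd, vv_rep _ _ _ this]
      push_cast
      exact ZMod.natCast_rightInverse c
  show Nat.card (Q23 ⧸ fQ.range) = 5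
  rw [Nat.card_congr e, Nat.card_zmod]

lemma iter_apply (n : ℕ) (p : Q23) :
    iterHom fQ n p = ⟨ofAdd ((((-5) ^ n : ℤ)) • toAdd p.left), p.right⟩ := by
  induction n generalizing p with
  | zero =>
    show p = _
    have : ((-5 : ℤ) ^ 0) • toAdd p.left = toAdd p.left := by rw [pow_zero, one_smul]
    rw [this]
    rfl
  | succ n ih =>
    show iterHom fQ n (fQ p) = _
    rw [ih]
    have h1 : toAdd (fQ p).left = (-5 : ℤ) • toAdd p.left := rfl
    have h2 : (fQ p).right = p.right := rfl
    rw [h1, h2, smul_smul, ← pow_succ]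

lemma inr_range_iff (p : Q23) :
    p ∈ (SemidirectProduct.inr : Multiplicative ℤ →* Q23).range ↔ p.left = 1 := by
  constructor
  · rintro ⟨g, rfl⟩; rfl
  · intro h
    exact ⟨p.right, SemidirectProduct.ext h.symm rfl⟩

lemma inf_eq : (⨅ k : ℕ, (iterHom fQ (k + 1)).range) =
    (SemidirectProduct.inr : Multiplicative ℤ →* Q23).range := by
  ext p
  simp only [Subgroup.mem_iInf, MonoidHom.mem_range, inr_range_iff p]
  constructor
  · intro h
    obtain ⟨m, j, hr⟩ := (toAdd p.left).2
    set k := m.natAbs with hk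
    obtain ⟨q, hq⟩ := h k
    rw [iter_apply] at hq
    have hL : ((toAdd p.left : Z16) : ℚ) = ((-5 : ℤ) ^ (k + 1) : ℤ) * ((toAdd q.left : Z16) : ℚ) := by
      have := congrArg (fun z : Q23 => ((toAdd z.left : Z16) : ℚ)) hq
      simp only at this
      rw [← this]
      simp only [toAdd_ofAdd]
      push_cast [zsmul_eq_mul]
      ring
    obtain ⟨m', j', hr'⟩ := (toAdd q.left).2
    have hrat : (m : ℚ) / 6 ^ j = ((-5 : ℤ) ^ (k + 1) : ℤ) * ((m' : ℚ) / 6 ^ j') := by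
      rw [← hr, ← hr']; exact hL
    have hcross : m * 6 ^ j' = (-5) ^ (k + 1) * m' * 6 ^ j := by
      have h6 : ((6 : ℚ)) ≠ 0 := by norm_num
      field_simp at hrat
      push_cast at hrat
      exact_mod_cast (by push_cast; linear_combination hrat : ((m * 6 ^ j' : ℤ) : ℚ) = (((-5) ^ (k + 1) * m' * 6 ^ j : ℤ) : ℚ))
    have hdvd : (5 : ℤ) ^ (k + 1) ∣ m * 6 ^ j' := by
      refine ⟨(-1) ^ (k + 1) * m' * 6 ^ j, ?_⟩
      rw [hcross]
      rw [neg_pow]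
      ring
    have hcop : IsCoprime ((5 : ℤ) ^ (k + 1)) ((6 : ℤ) ^ j') := by
      apply IsCoprime.pow
      rw [Int.isCoprime_iff_gcd_eq_one]
      decide
    have hdvd' : (5 : ℤ) ^ (k + 1) ∣ m := hcop.dvd_of_dvd_mul_right hdvd
    have hm : m = 0 := by
      refine Int.eq_zero_of_abs_lt_dvd hdvd' ?_
      rw [Int.abs_eq_natAbs, ← hk]
      have h1 : k < 5 ^ k := Nat.lt_pow_self (by norm_num)
      have h2 : (5 : ℕ) ^ k ≤ 5 ^ (k + 1) := Nat.pow_le_pow_right (by norm_num) (Nat.le_succ k)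
      exact_mod_cast lt_of_lt_of_le h1 h2
    have : toAdd p.left = 0 := by
      apply Subtype.ext
      rw [hr, hm]
      norm_num
    calc p.left = ofAdd (toAdd p.left) := rfl
      _ = ofAdd 0 := by rw [this]
      _ = 1 := rfl
  · intro h k
    refine ⟨SemidirectProduct.inr p.right, ?_⟩
    rw [iter_apply]
    apply SemidirectProduct.ext
    · show ofAdd _ = p.left
      rw [SemidirectProduct.left_inr]
      have : toAdd (1 : Multiplicative Z16) = 0 := rfl
      rw [this, smul_zero]
      exact h.symm
    · exact rfl

/-- **Lemma.** The map `f : Q(2,3) → Q(2,3)`, `f(x, y) = (−5x, y)`, is a well-defined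
injective group homomorphism, its image has index `5`, and `⋂_{k≥1} im fᵏ` is the
subgroup `0 ⋊ ℤ = {(0, y) : y ∈ ℤ}`. -/
theorem Q23_endomorphism_properties :
    ∃ f : Q23 →* Q23,
      (∀ (x : Z16) (y : ℤ), f ⟨ofAdd x, ofAdd y⟩ = ⟨ofAdd ((-5 : ℤ) • x), ofAdd y⟩) ∧
      Function.Injective f ∧
      f.range.index = 5 ∧
      (⨅ k : ℕ, (iterHom f (k + 1)).range) =
        (SemidirectProduct.inr : Multiplicative ℤ →* Q23).range := by
  exact ⟨fQ, fun x y => fQ_apply x y, fQ_inj, index_eq, inf_eq⟩
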